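/- Let A ∈ ℝ^{m×m} be symmetric positive semi-definite of rank r_A ≥ 1, with orthonormal eigenvectors u_1, …, u_{r_A} and eigenvalues λ_1 ≥ … ≥ λ_{r_A} > 0, and set U = [u_1, …, u_{r_A}]. Fix an integer r with r_A ≤ r ≤ m and ρ ∈ {0, 1, …, r_A − 1}, and set A_ρ = Σ_{i=1}^{ρ} λ_i u_i u_iᵀ (with A_0 = 0), which is a best rank-ρ approximation of A in Frobenius norm. Suppose X ∈ St(m,r) and Θ ∈ ℝ^{r×r} is symmetric with XΘXᵀ = A_ρ and Tr(XᵀUUᵀX) = ρ. Then (X,Θ) is a saddle point of f_∞(X,Θ) = (1/4)‖XΘXᵀ − A‖_F² over St(m,r) × {symmetric r×r matrices}; precisely: (a) ∇_Θ f_∞(X,Θ) = (1/2)Xᵀ(XΘXᵀ − A)X = 0, and the Riemannian gradient (I_m − XXᵀ)∇_X f_∞(X,Θ) + (X/2)(Xᵀ∇_X f_∞(X,Θ) − ∇_X f_∞(X,Θ)ᵀX) = 0, where ∇_X f_∞(X,Θ) = (XΘXᵀ − A)XΘ; and (b) for every ν ∈ (0, λ_{r_A}) there exist (X₊, Θ₊)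 and (X₋, Θ₋) with X₊ᵀX₊ = X₋ᵀX₋ = I_r, Θ₊ and Θ₋ symmetric, √(‖X₊ − X‖_F² + ‖Θ₊ − Θ‖_F²) ≤ ν, √(‖X₋ − X‖_F² + ‖Θ₋ − Θ‖_F²) ≤ ν, and f_∞(X₋, Θ₋) < f_∞(X, Θ) < f_∞(X₊, Θ₊). -/

import Mathlib

open Matrix MeasureTheory ProbabilityTheory BigOperators

noncomputable section

/-- Frobenius norm of a real matrix. -/
def frob {m n : ℕ} (M : Matrix (Fin m) (Fin n) ℝ) : ℝ :=
  Real.sqrt (∑ i, ∑ j, (M i j) ^ 2)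

/-- Euclidean norm of a vector in `ℝⁿ`. -/
def vnorm {n : ℕ} (v : Fin n → ℝ) : ℝ :=
  Real.sqrt (∑ i, (v i) ^ 2)

/-- Spectral norm (operator 2-norm) of a real matrix. -/
def spec {m n : ℕ} (M : Matrix (Fin m) (Fin n) ℝ) : ℝ :=
  ‖LinearMap.toContinuousLinearMap (Matrix.toEuclideanLin M)‖

theorem isHermitian_tmul {m n : ℕ} (M : Matrix (Fin m) (Fin n) ℝ) :
    (Mᵀ * M).IsHermitian := by
  simpa [Matrix.conjTranspose_eq_transpose_of_trivial] using
    Matrix.isHermitian_conjTranspose_mul_self M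

theorem posSemidef_tmul {m n : ℕ} (M : Matrix (Fin m) (Fin n) ℝ) :
    (Mᵀ * M).PosSemidef := by
  simpa [Matrix.conjTranspose_eq_transpose_of_trivial] using
    Matrix.posSemidef_conjTranspose_mul_self M

/-- The `i`-th largest singular value (1-indexed) of a real matrix, i.e. the square root of the
`i`-th largest eigenvalue of `MᵀM`; junk value `0` when `i` is out of range. -/
def svalue {m n : ℕ} (M : Matrix (Fin m) (Fin n) ℝ) (i : ℕ) : ℝ :=
  if h : 1 ≤ i ∧ i ≤ n then
    Real.sqrt ((isHermitian_tmul M).eigenvalues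
      (Tuple.sort (isHermitian_tmul M).eigenvalues ⟨n - i, by omega⟩))
  else 0

/-- Membership in the Stiefel manifold `St(m,r)`. -/
def Stiefel {m r : ℕ} (X : Matrix (Fin m) (Fin r) ℝ) : Prop :=
  Xᵀ * X = 1

/-- The Loewner order on (symmetric) real matrices: `A ⪯ B`. -/
def loewnerLE {m : ℕ} (A B : Matrix (Fin m) (Fin m) ℝ) : Prop :=
  (B - A).PosSemidef

/-- The inverse of the positive semidefinite square root of a matrix (junk value `0` when the
matrix is not positive semidefinite). -/
def sqrtInv {r : ℕ} (S : Matrix (Fin r) (Fin r) ℝ) : Matrix (Fin r) (Fin r) ℝ :=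
  haveI := Classical.propDecidable S.PosSemidef
  if h : S.PosSemidef then
    ((h.1.eigenvectorUnitary : Matrix (Fin r) (Fin r) ℝ) *
      Matrix.diagonal (fun i => Real.sqrt (h.1.eigenvalues i)) *
      (star h.1.eigenvectorUnitary : Matrix (Fin r) (Fin r) ℝ))⁻¹ else 0

/-- The linear sensing map `𝓜` determined by feature matrices `M_i`:
`𝓜(B)_i = Tr(M_iᵀ B)`. -/
def calM {m n : ℕ} (Ms : Fin n → Matrix (Fin m) (Fin m) ℝ)
    (B : Matrix (Fin m) (Fin m) ℝ) : Fin n → ℝ :=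
  fun i => ((Ms i)ᵀ * B).trace

/-- The adjoint `𝓜*` of the sensing map: `𝓜*(y) = ∑ i, y_i M_i`. -/
def calMadj {m n : ℕ} (Ms : Fin n → Matrix (Fin m) (Fin m) ℝ)
    (y : Fin n → ℝ) : Matrix (Fin m) (Fin m) ℝ :=
  ∑ i, y i • Ms i

/-- `(𝓜*𝓜 − 𝓘)(B)`. -/
def calE {m n : ℕ} (Ms : Fin n → Matrix (Fin m) (Fin m) ℝ)
    (B : Matrix (Fin m) (Fin m) ℝ) : Matrix (Fin m) (Fin m) ℝ :=
  calMadj Ms (calM Ms B) - B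

/-- The `(s, δ)`-restricted isometry property for the sensing map determined by `Ms`. -/
def IsRIP {m n : ℕ} (Ms : Fin n → Matrix (Fin m) (Fin m) ℝ) (s : ℕ) (δ : ℝ) : Prop :=
  ∀ B : Matrix (Fin m) (Fin m) ℝ, B.IsSymm → B.rank ≤ s →
    (1 - δ) * frob B ^ 2 ≤ vnorm (calM Ms B) ^ 2 ∧
      vnorm (calM Ms B) ^ 2 ≤ (1 + δ) * frob B ^ 2

/-- The Riemannian gradient on the Stiefel manifold obtained from the Euclidean gradient `g`
at the point `X`. -/
def Rgrad {m r : ℕ} (X g : Matrix (Fin m) (Fin r) ℝ) : Matrix (Fin m) (Fin r) ℝ :=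
  (1 - X * Xᵀ) * g + (2⁻¹ : ℝ) • (X * (Xᵀ * g - gᵀ * X))

/-- One step of Riemannian gradient descent (with `μ = 2`) for the weight-normalized
matrix sensing problem. -/
def RGDstep {m r n : ℕ} (Ms : Fin n → Matrix (Fin m) (Fin m) ℝ)
    (A : Matrix (Fin m) (Fin m) ℝ) (η : ℝ)
    (p : Matrix (Fin m) (Fin r) ℝ × Matrix (Fin r) (Fin r) ℝ) :
    Matrix (Fin m) (Fin r) ℝ × Matrix (Fin r) (Fin r) ℝ :=
  let X := p.1
  let Θ := p.2
  let Gt := calMadj Ms (calM Ms (X * Θ * Xᵀ - A)) * X * Θ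
  let G := Rgrad X Gt
  let X' := (X - η • G) * sqrtInv (1 + η ^ 2 • (Gᵀ * G))
  let Θ' := X'ᵀ * A * X' - X'ᵀ * calE Ms (X' * Θ * X'ᵀ - A) * X'
  (X', Θ')

/-- The standard Gaussian ensemble on `m × r` real matrices (i.i.d. `N(0,1)` entries). -/
def gaussianEnsemble (m r : ℕ) : Measure (Fin m → Fin r → ℝ) :=
  Measure.pi fun _ : Fin m => Measure.pi fun _ : Fin r => gaussianReal 0 1

end


section myhelpers
open Matrix BigOperators
variable {m n r : ℕ}

variable {m n r : ℕ}

lemma trace_form (M N : Matrix (Fin m) (Fin n) ℝ) :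
    (Mᵀ * N).trace = ∑ i, ∑ j, M i j * N i j := by
  simp only [Matrix.trace, Matrix.diag, Matrix.mul_apply, Matrix.transpose_apply]
  exact Finset.sum_comm

lemma frob_sq (M : Matrix (Fin m) (Fin n) ℝ) :
    frob M ^ 2 = ∑ i, ∑ j, M i j ^ 2 := by
  rw [frob, Real.sq_sqrt]; positivity

lemma frob_sq_trace (M : Matrix (Fin m) (Fin n) ℝ) :
    frob M ^ 2 = (Mᵀ * M).trace := by
  rw [frob_sq, trace_form]
  apply Finset.sum_congr rfl; intro i _
  apply Finset.sum_congr rfl; intro j _; ring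

lemma frob_sq_add (M N : Matrix (Fin m) (Fin n) ℝ) :
    frob (M + N) ^ 2 = frob M ^ 2 + 2 * (Mᵀ * N).trace + frob N ^ 2 := by
  simp only [frob_sq, trace_form, Matrix.add_apply, Finset.mul_sum,
    ← Finset.sum_add_distrib]
  apply Finset.sum_congr rfl; intro i _
  apply Finset.sum_congr rfl; intro j _; ring

lemma frob_sq_smul (s : ℝ) (M : Matrix (Fin m) (Fin n) ℝ) :
    frob (s • M) ^ 2 = s ^ 2 * frob M ^ 2 := by
  simp only [frob_sq, Matrix.smul_apply, smul_eq_mul, mul_pow, Finset.mul_sum]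

lemma frob_sub_self (M : Matrix (Fin m) (Fin n) ℝ) : frob (M - M) ^ 2 = 0 := by
  simp [frob_sq]

lemma mul_vecMulVec (M : Matrix (Fin m) (Fin n) ℝ) (w : Fin n → ℝ) (z : Fin r → ℝ) :
    M * vecMulVec w z = vecMulVec (M *ᵥ w) z := by
  ext i j
  simp [Matrix.mul_apply, vecMulVec_apply, Matrix.mulVec, dotProduct,
    Finset.sum_mul, mul_assoc]

lemma vecMulVec_mul (w : Fin m → ℝ) (z : Fin n → ℝ) (M : Matrix (Fin n) (Fin r) ℝ) :
    vecMulVec w z * M = vecMulVec w (z ᵥ* M) := by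
  ext i j
  simp [Matrix.mul_apply, vecMulVec_apply, Matrix.vecMul, dotProduct,
    Finset.mul_sum, mul_assoc]

lemma vecMulVec_transpose (w : Fin m → ℝ) (z : Fin n → ℝ) :
    (vecMulVec w z)ᵀ = vecMulVec z w := by
  ext i j; simp [vecMulVec_apply, mul_comm]

lemma vecMulVec_mul_vecMulVec (a : Fin m → ℝ) (b c : Fin n → ℝ) (d : Fin r → ℝ) :
    vecMulVec a b * vecMulVec c d = (b ⬝ᵥ c) • vecMulVec a d := by
  ext i j
  simp [Matrix.mul_apply, vecMulVec_apply, dotProduct, Finset.mul_sum, Finset.sum_mul]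
  apply Finset.sum_congr rfl; intro k _; ring

lemma vecMulVec_smul_left (s : ℝ) (w : Fin m → ℝ) (z : Fin n → ℝ) :
    vecMulVec (s • w) z = s • vecMulVec w z := by
  ext i j; simp [vecMulVec_apply, mul_assoc]

lemma vecMulVec_add_left (a b : Fin m → ℝ) (z : Fin n → ℝ) :
    vecMulVec (a + b) z = vecMulVec a z + vecMulVec b z := by
  ext i j; simp [vecMulVec_apply, add_mul]

lemma vecMulVec_add_right (a : Fin m → ℝ) (b c : Fin n → ℝ) :
    vecMulVec a (b + c) = vecMulVec a b + vecMulVec a c := by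
  ext i j; simp [vecMulVec_apply, mul_add]

lemma vecMulVec_zero_right (a : Fin m → ℝ) :
    vecMulVec a (0 : Fin n → ℝ) = 0 := by
  ext i j; simp [vecMulVec_apply]

lemma vecMulVec_zero_left (a : Fin n → ℝ) :
    vecMulVec (0 : Fin m → ℝ) a = 0 := by
  ext i j; simp [vecMulVec_apply]

lemma trace_transpose_mul_vecMulVec (M : Matrix (Fin m) (Fin n) ℝ) (a : Fin m → ℝ) (b : Fin n → ℝ) :
    (Mᵀ * vecMulVec a b).trace = a ⬝ᵥ (M *ᵥ b) := by
  rw [trace_form]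
  simp only [vecMulVec_apply, dotProduct, Matrix.mulVec, dotProduct]
  simp only [Finset.mul_sum]
  apply Finset.sum_congr rfl; intro i _
  apply Finset.sum_congr rfl; intro j _; ring

lemma frob_sq_vecMulVec (a : Fin m → ℝ) (b : Fin n → ℝ) :
    frob (vecMulVec a b) ^ 2 = (a ⬝ᵥ a) * (b ⬝ᵥ b) := by
  simp only [frob_sq, vecMulVec_apply, dotProduct, mul_pow, ← Finset.mul_sum,
    Finset.sum_mul]
  apply Finset.sum_congr rfl; intro i _
  simp only [Finset.mul_sum]
  apply Finset.sum_congr rfl; intro j _; ring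


lemma vecMulVec_smul_right (s : ℝ) (w : Fin m → ℝ) (z : Fin n → ℝ) :
    vecMulVec w (s • z) = s • vecMulVec w z := by
  ext i j; simp [vecMulVec_apply]; ring

lemma stiefel_dot {X : Matrix (Fin m) (Fin r) ℝ} (hX : Xᵀ * X = 1)
    (v w : Fin r → ℝ) : (X *ᵥ v) ⬝ᵥ (X *ᵥ w) = v ⬝ᵥ w := by
  rw [Matrix.dotProduct_mulVec, ← Matrix.mulVec_transpose, Matrix.mulVec_mulVec, hX,
    Matrix.one_mulVec]


lemma card_filter_lt {n : ℕ} (ρ : ℕ) (h : ρ ≤ n) :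
    (Finset.univ.filter (fun i : Fin n => (i : ℕ) < ρ)).card = ρ := by
  apply Finset.card_eq_of_bijective (fun k hk => (⟨k, by omega⟩ : Fin n))
  · intro i hi
    have hi' : (i : ℕ) < ρ := by simpa using (Finset.mem_filter.mp hi).2
    exact ⟨(i : ℕ), hi', by ext; simp⟩
  · intro k hk; simp [hk]
  · intro k l hk hl hkl
    simpa [Fin.ext_iff] using hkl

end myhelpers

set_option maxHeartbeats 4000000

noncomputable section

theorem stmt9 {m r r_A : ℕ} (h1 : 1 ≤ r_A) (h2 : r_A ≤ r) (h3 : r ≤ m)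
    (lam : Fin r_A → ℝ) (hlam_pos : ∀ i, 0 < lam i)
    (hlam_mono : ∀ i j : Fin r_A, i ≤ j → lam j ≤ lam i)
    (U : Matrix (Fin m) (Fin r_A) ℝ) (hU : Stiefel U)
    (A : Matrix (Fin m) (Fin m) ℝ) (hA : A = U * Matrix.diagonal lam * Uᵀ)
    (ρ : ℕ) (hρ : ρ < r_A)
    (Aρ : Matrix (Fin m) (Fin m) ℝ)
    (hAρ : Aρ = U * Matrix.diagonal (fun i : Fin r_A => if (i : ℕ) < ρ then lam i else 0) * Uᵀ)
    (X : Matrix (Fin m) (Fin r) ℝ) (hX : Stiefel X)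
    (Θ : Matrix (Fin r) (Fin r) ℝ) (hΘsym : Θ.IsSymm)
    (hfac : X * Θ * Xᵀ = Aρ) (htr : (Xᵀ * U * Uᵀ * X).trace = (ρ : ℝ)) :
    ((2⁻¹ : ℝ) • (Xᵀ * (X * Θ * Xᵀ - A) * X) = 0) ∧
    (Rgrad X ((X * Θ * Xᵀ - A) * X * Θ) = 0) ∧
    (∀ ν : ℝ, 0 < ν → ν < lam ⟨r_A - 1, by omega⟩ →
      ((∃ Xp : Matrix (Fin m) (Fin r) ℝ, ∃ Θp : Matrix (Fin r) (Fin r) ℝ,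
          Xpᵀ * Xp = 1 ∧ Θp.IsSymm ∧
          Real.sqrt (frob (Xp - X) ^ 2 + frob (Θp - Θ) ^ 2) ≤ ν ∧
          (1 / 4) * frob (X * Θ * Xᵀ - A) ^ 2 < (1 / 4) * frob (Xp * Θp * Xpᵀ - A) ^ 2) ∧
       (∃ Xm : Matrix (Fin m) (Fin r) ℝ, ∃ Θm : Matrix (Fin r) (Fin r) ℝ,
          Xmᵀ * Xm = 1 ∧ Θm.IsSymm ∧
          Real.sqrt (frob (Xm - X) ^ 2 + frob (Θm - Θ) ^ 2) ≤ ν ∧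
          (1 / 4) * frob (Xm * Θm * Xmᵀ - A) ^ 2 < (1 / 4) * frob (X * Θ * Xᵀ - A) ^ 2))) := by
  -- notation
  have hXX : Xᵀ * X = 1 := hX
  have hUU : Uᵀ * U = 1 := hU
  set dρ : Fin r_A → ℝ := fun i => if (i : ℕ) < ρ then lam i else 0 with hdρ
  -- Step 0 : X Xᵀ Aρ = Aρ
  have hXXAρ : X * (Xᵀ * Aρ) = Aρ := by
    conv_lhs => rw [← hfac]
    have h1 : Xᵀ * (X * Θ * Xᵀ) = Θ * Xᵀ := by
      calc Xᵀ * (X * Θ * Xᵀ) = (Xᵀ * X) * (Θ * Xᵀ) := by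
            simp only [Matrix.mul_assoc]
        _ = Θ * Xᵀ := by rw [hXX, Matrix.one_mul]
    rw [h1, ← Matrix.mul_assoc, hfac]
  -- Step 1 : the key column identity
  have hPUD : (X * (Xᵀ * U)) * Matrix.diagonal dρ = U * Matrix.diagonal dρ := by
    have h2 := congrArg (fun M => M * U) hXXAρ
    simp only [hAρ, Matrix.mul_assoc] at h2
    rw [hUU, Matrix.mul_one] at h2
    simpa [Matrix.mul_assoc] using h2
  have hcol : ∀ (j : Fin m) (i : Fin r_A), (i : ℕ) < ρ → (X * (Xᵀ * U)) j i = U j i := by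
    intro j i hi
    have h3 := congrFun (congrFun hPUD j) i
    rw [Matrix.mul_diagonal, Matrix.mul_diagonal] at h3
    have hdi : dρ i = lam i := by simp [hdρ, hi]
    rw [hdi] at h3
    exact mul_right_cancel₀ (ne_of_gt (hlam_pos i)) h3
  set T : Matrix (Fin r_A) (Fin r_A) ℝ := Uᵀ * (X * (Xᵀ * U)) with hT
  have hTdiag : ∀ i, T i i = ∑ j, ((Xᵀ * U) j i) ^ 2 := by
    intro i
    have h4 : T = (Xᵀ * U)ᵀ * (Xᵀ * U) := by
      rw [hT, Matrix.transpose_mul, Matrix.transpose_transpose, Matrix.mul_assoc]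
    rw [h4]
    simp only [Matrix.mul_apply, Matrix.transpose_apply, pow_two]
  have hTone : ∀ i : Fin r_A, (i : ℕ) < ρ → T i i = 1 := by
    intro i hi
    have h5 : T i i = ∑ j, U j i * (X * (Xᵀ * U)) j i := by
      simp [hT, Matrix.mul_apply]
    rw [h5]
    have h6 : ∑ j, U j i * (X * (Xᵀ * U)) j i = ∑ j, U j i * U j i :=
      Finset.sum_congr rfl fun j _ => by rw [hcol j i hi]
    rw [h6]
    have h7 : (Uᵀ * U) i i = (1 : Matrix (Fin r_A) (Fin r_A) ℝ) i i := by rw [hUU]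
    simpa [Matrix.mul_apply, Matrix.one_apply] using h7
  have hTtr : ∑ i, T i i = (ρ : ℝ) := by
    have h8 : T.trace = (Xᵀ * U * Uᵀ * X).trace := by
      rw [hT, Matrix.trace_mul_comm]
      rw [Matrix.trace_mul_comm (Xᵀ * U * Uᵀ) X]
      congr 1
      simp only [Matrix.mul_assoc]
    have h9 : T.trace = ∑ i, T i i := rfl
    rw [← h9, h8, htr]
  have hTnn : ∀ i : Fin r_A, 0 ≤ T i i := by
    intro i; rw [hTdiag]; positivity
  have hL : ∀ (j : Fin r) (i : Fin r_A), ρ ≤ (i : ℕ) → (Xᵀ * U) j i = 0 := by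
    have hsplit := Finset.sum_filter_add_sum_filter_not Finset.univ
      (fun i : Fin r_A => (i : ℕ) < ρ) (fun i => T i i)
    have hs1 : ∑ i ∈ Finset.univ.filter (fun i : Fin r_A => (i : ℕ) < ρ), T i i = (ρ : ℝ) := by
      rw [Finset.sum_congr rfl (fun i hi => hTone i (Finset.mem_filter.mp hi).2)]
      simp [card_filter_lt ρ (le_of_lt hρ)]
    have hs2 : ∑ i ∈ Finset.univ.filter (fun i : Fin r_A => ¬ (i : ℕ) < ρ), T i i = 0 := by
      have := hsplit
      rw [hs1, hTtr] at this
      linarith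
    have hzero : ∀ i : Fin r_A, ρ ≤ (i : ℕ) → T i i = 0 := by
      intro i hi
      have := (Finset.sum_eq_zero_iff_of_nonneg
        (fun i _ => hTnn i)).mp hs2 i (by simpa using hi)
      exact this
    intro j i hi
    have h10 : ∑ j, ((Xᵀ * U) j i) ^ 2 = 0 := by rw [← hTdiag]; exact hzero i hi
    have h11 := (Finset.sum_eq_zero_iff_of_nonneg
      (fun j _ => sq_nonneg ((Xᵀ * U) j i))).mp h10 j (Finset.mem_univ j)
    exact sq_eq_zero_iff.mp h11
  -- matrix identities
  set dc : Fin r_A → ℝ := fun i => if (i : ℕ) < ρ then 0 else lam i with hdc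
  have hAmAρ : A - Aρ = U * Matrix.diagonal dc * Uᵀ := by
    have hfun : (fun i => lam i - dρ i) = dc := by
      funext i
      by_cases hi : (i : ℕ) < ρ <;> simp [hdc, hdρ, hi]
    rw [hA, hAρ, ← Matrix.sub_mul, ← Matrix.mul_sub, Matrix.diagonal_sub, hfun]
  have hXtdc : (Xᵀ * U) * Matrix.diagonal dc = 0 := by
    ext j i
    rw [Matrix.mul_diagonal]
    by_cases hi : (i : ℕ) < ρ
    · simp [hdc, hi]
    · rw [hL j i (Nat.le_of_not_lt hi)]
      simp
  have hXtAmA : Xᵀ * (A - Aρ) = 0 := by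
    rw [hAmAρ]
    calc Xᵀ * (U * Matrix.diagonal dc * Uᵀ) = ((Xᵀ * U) * Matrix.diagonal dc) * Uᵀ := by
          simp only [Matrix.mul_assoc]
      _ = 0 := by rw [hXtdc, Matrix.zero_mul]
  have hAmAsymm : (A - Aρ)ᵀ = A - Aρ := by
    rw [hAmAρ]
    rw [Matrix.transpose_mul, Matrix.transpose_mul, Matrix.transpose_transpose,
      Matrix.diagonal_transpose, Matrix.mul_assoc]
  have hAmAX : (A - Aρ) * X = 0 := by
    have h12 := congrArg Matrix.transpose hXtAmA
    rw [Matrix.transpose_mul, Matrix.transpose_transpose, hAmAsymm,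
      Matrix.transpose_zero] at h12
    exact h12
  have hE : X * Θ * Xᵀ - A = -(A - Aρ) := by rw [hfac, neg_sub]
  have hEX : (X * Θ * Xᵀ - A) * X = 0 := by
    rw [hE, Matrix.neg_mul, hAmAX, neg_zero]
  have ha1 : Xᵀ * (X * Θ * Xᵀ - A) * X = 0 := by
    rw [hE, Matrix.mul_neg, Matrix.neg_mul, hXtAmA, Matrix.zero_mul, neg_zero]
  refine ⟨by rw [ha1, smul_zero], ?_, ?_⟩
  · have hG0 : (X * Θ * Xᵀ - A) * X * Θ = 0 := by rw [hEX, Matrix.zero_mul]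
    rw [hG0]
    simp [Rgrad]
  intro ν hν hν'
  set iρ : Fin r_A := ⟨ρ, hρ⟩ with hiρ
  set lρ : ℝ := lam iρ with hlρ
  have hlρpos : 0 < lρ := hlam_pos iρ
  -- the ρ-th eigenvector
  set e : Fin r_A → ℝ := Pi.single iρ 1 with he
  set u : Fin m → ℝ := U *ᵥ e with hu
  have huu : u ⬝ᵥ u = 1 := by
    rw [hu, stiefel_dot hUU, he, dotProduct_single]
    simp
  have hXtu : Xᵀ *ᵥ u = 0 := by
    funext j
    have h13 : (Xᵀ *ᵥ u) j = (Xᵀ * U) j iρ := by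
      rw [hu, Matrix.mulVec_mulVec, he]
      rw [Matrix.mulVec_single]
      simp
    rw [h13, hL j iρ (le_refl ρ)]
    rfl
  have hAU : A * U = U * Matrix.diagonal lam := by
    rw [hA]
    simp only [Matrix.mul_assoc]
    rw [hUU, Matrix.mul_one]
  have hAρU : Aρ * U = U * Matrix.diagonal dρ := by
    rw [hAρ]
    simp only [Matrix.mul_assoc]
    rw [hUU, Matrix.mul_one]
  have hAu : A *ᵥ u = lρ • u := by
    rw [hu, Matrix.mulVec_mulVec, hAU, ← Matrix.mulVec_mulVec, he,
      Matrix.diagonal_mulVec_single]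
    rw [mul_one]
    have : Pi.single iρ lρ = lρ • e := by
      rw [he, ← Pi.single_smul, smul_eq_mul, mul_one]
    rw [this, Matrix.mulVec_smul]
  have hAρu : Aρ *ᵥ u = 0 := by
    rw [hu, Matrix.mulVec_mulVec, hAρU, ← Matrix.mulVec_mulVec, he,
      Matrix.diagonal_mulVec_single]
    have : dρ iρ = 0 := by simp [hdρ, hiρ]
    rw [this, zero_mul, Pi.single_zero, Matrix.mulVec_zero]
  constructor
  -- ascent direction
  · set e0 : Fin r → ℝ := Pi.single ⟨0, by omega⟩ 1 with he0
    have he0e0 : e0 ⬝ᵥ e0 = 1 := by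
      rw [he0, dotProduct_single]; simp
    set xe : Fin m → ℝ := X *ᵥ e0 with hxe
    refine ⟨X, Θ + ν • vecMulVec e0 e0, hXX, ?_, ?_, ?_⟩
    · rw [Matrix.IsSymm, Matrix.transpose_add, Matrix.transpose_smul, _root_.vecMulVec_transpose,
        hΘsym]
    · have h14 : frob (X - X) ^ 2 = 0 := frob_sub_self X
      have h15 : Θ + ν • vecMulVec e0 e0 - Θ = ν • vecMulVec e0 e0 := by
        rw [add_sub_cancel_left]
      rw [h15, h14, frob_sq_smul, frob_sq_vecMulVec, he0e0]
      rw [zero_add]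
      have : ν ^ 2 * (1 * 1) = ν ^ 2 := by ring
      rw [this, Real.sqrt_sq hν.le]
    · have hexpand : X * (Θ + ν • vecMulVec e0 e0) * Xᵀ - A =
          (X * Θ * Xᵀ - A) + ν • vecMulVec xe xe := by
        rw [Matrix.mul_add, Matrix.add_mul]
        have h16 : X * (ν • vecMulVec e0 e0) * Xᵀ = ν • vecMulVec xe xe := by
          rw [Matrix.mul_smul, Matrix.smul_mul, _root_.mul_vecMulVec, _root_.vecMulVec_mul,
            Matrix.vecMul_transpose, hxe]
        rw [h16]
        abel
      rw [hexpand, frob_sq_add, frob_sq_smul, frob_sq_vecMulVec]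
      have hxexe : xe ⬝ᵥ xe = 1 := by rw [hxe, stiefel_dot hXX, he0e0]
      have hcross : ((X * Θ * Xᵀ - A)ᵀ * (ν • vecMulVec xe xe)).trace = 0 := by
        rw [Matrix.mul_smul, Matrix.trace_smul, trace_transpose_mul_vecMulVec]
        have h17 : (X * Θ * Xᵀ - A) *ᵥ xe = 0 := by
          rw [hxe, Matrix.mulVec_mulVec, hEX, Matrix.zero_mulVec]
        rw [h17, dotProduct_zero, smul_zero]
      rw [hcross, hxexe]
      nlinarith [sq_nonneg (frob (X * Θ * Xᵀ - A))]
  -- descent direction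
  · -- find a unit kernel vector of Θ
    have hΘeq : Θ = Xᵀ * Aρ * X := by
      rw [← hfac]
      calc Θ = (Xᵀ * X) * Θ * (Xᵀ * X) := by rw [hXX, Matrix.one_mul, Matrix.mul_one]
        _ = Xᵀ * (X * Θ * Xᵀ) * X := by simp only [Matrix.mul_assoc]
    have hrank : Θ.rank ≤ ρ := by
      rw [hΘeq]
      calc (Xᵀ * Aρ * X).rank ≤ (Xᵀ * Aρ).rank := Matrix.rank_mul_le_left _ _
        _ ≤ Aρ.rank := Matrix.rank_mul_le_right _ _
        _ ≤ (Matrix.diagonal dρ * Uᵀ).rank := by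
            rw [hAρ, Matrix.mul_assoc]
            exact Matrix.rank_mul_le_right _ _
        _ ≤ (Matrix.diagonal dρ).rank := Matrix.rank_mul_le_left _ _
        _ ≤ ρ := by
            rw [Matrix.rank_diagonal]
            rw [Fintype.card_subtype]
            have hfc : (Finset.univ.filter (fun i : Fin r_A => dρ i ≠ 0)) =
                (Finset.univ.filter (fun i : Fin r_A => (i : ℕ) < ρ)) := by
              apply Finset.filter_congr
              intro i _
              by_cases hi : (i : ℕ) < ρ <;>
                simp [hdρ, hi, ne_of_gt (hlam_pos i)]
            rw [hfc, card_filter_lt ρ (le_of_lt hρ)]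
    have hdet : Θ.det = 0 := by
      by_contra hd
      have hunit : IsUnit Θ := (Matrix.isUnit_iff_isUnit_det Θ).mpr (isUnit_iff_ne_zero.mpr hd)
      have := Matrix.rank_of_isUnit Θ hunit
      rw [Fintype.card_fin] at this
      omega
    obtain ⟨v, hv0, hvz⟩ := Matrix.exists_mulVec_eq_zero_iff.mpr hdet
    have hvvnn : 0 ≤ v ⬝ᵥ v :=
      Finset.sum_nonneg fun i _ => mul_self_nonneg (v i)
    have hvvpos : 0 < v ⬝ᵥ v := by
      rcases lt_or_eq_of_le hvvnn with h | h
      · exact h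
      · exact absurd (dotProduct_self_eq_zero.mp h.symm) hv0
    set z : Fin r → ℝ := (Real.sqrt (v ⬝ᵥ v))⁻¹ • v with hz
    have hsq : Real.sqrt (v ⬝ᵥ v) ≠ 0 := ne_of_gt (Real.sqrt_pos.mpr hvvpos)
    have hzz : z ⬝ᵥ z = 1 := by
      rw [hz, smul_dotProduct, dotProduct_smul, smul_eq_mul, smul_eq_mul,
        ← mul_assoc, ← mul_inv, Real.mul_self_sqrt hvvnn]
      exact inv_mul_cancel₀ (ne_of_gt hvvpos)
    have hΘz : Θ *ᵥ z = 0 := by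
      rw [hz, Matrix.mulVec_smul, hvz, smul_zero]
    have hzΘ : z ᵥ* Θ = 0 := by
      rw [← Matrix.mulVec_transpose, hΘsym, hΘz]
    -- parameters
    set δ : ℝ := min ν 1 / 2 with hδ
    have hδpos : 0 < δ := by
      rw [hδ]; positivity
    have hδν : δ ≤ ν / 2 := by
      rw [hδ]; have := min_le_left ν 1; linarith
    have hδ1 : δ ≤ 1 / 2 := by
      rw [hδ]; have := min_le_right ν 1; linarith
    set c : ℝ := Real.sqrt (1 - δ ^ 2) with hc
    have hδ2le : δ ^ 2 ≤ 1 := by nlinarith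
    have hc2 : c ^ 2 = 1 - δ ^ 2 := Real.sq_sqrt (by linarith)
    have hc1 : c ≤ 1 := by
      rw [hc]
      calc Real.sqrt (1 - δ ^ 2) ≤ Real.sqrt 1 := Real.sqrt_le_sqrt (by nlinarith)
        _ = 1 := Real.sqrt_one
    have hclb : 1 - δ ^ 2 ≤ c := by
      rw [hc]
      calc 1 - δ ^ 2 = Real.sqrt ((1 - δ ^ 2) ^ 2) := (Real.sqrt_sq (by linarith)).symm
        _ ≤ Real.sqrt (1 - δ ^ 2) := Real.sqrt_le_sqrt (by nlinarith)
    set s : ℝ := min (ν / 2) (lρ * δ ^ 2) with hs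
    have hspos : 0 < s := by
      rw [hs]; apply lt_min (by linarith) (by positivity)
    have hsν : s ≤ ν / 2 := min_le_left _ _
    have hsl : s ≤ lρ * δ ^ 2 := min_le_right _ _
    -- vectors
    set x : Fin m → ℝ := X *ᵥ z with hx
    set w : Fin m → ℝ := (c - 1) • x + δ • u with hw
    set q : Fin m → ℝ := c • x + δ • u with hq
    have hxx : x ⬝ᵥ x = 1 := by rw [hx, stiefel_dot hXX, hzz]
    have hxu : x ⬝ᵥ u = 0 := by
      rw [dotProduct_comm, hx, Matrix.dotProduct_mulVec, ← Matrix.mulVec_transpose,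
        hXtu, zero_dotProduct]
    have hux : u ⬝ᵥ x = 0 := by rw [dotProduct_comm]; exact hxu
    have hXtx : Xᵀ *ᵥ x = z := by
      rw [hx, Matrix.mulVec_mulVec, hXX, Matrix.one_mulVec]
    have hxwq : x + w = q := by
      rw [hw, hq]; funext j; simp; ring
    have hEmx : (A - Aρ) *ᵥ x = 0 := by
      rw [hx, Matrix.mulVec_mulVec, hAmAX, Matrix.zero_mulVec]
    -- the matrices
    set Z : Matrix (Fin r) (Fin r) ℝ := vecMulVec z z with hZ
    set W : Matrix (Fin m) (Fin r) ℝ := vecMulVec w z with hW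
    refine ⟨X + W, Θ + s • Z, ?_, ?_, ?_, ?_⟩
    · -- Stiefel
      have hXtw : Xᵀ *ᵥ w = (c - 1) • z := by
        rw [hw, Matrix.mulVec_add, Matrix.mulVec_smul, Matrix.mulVec_smul, hXtx, hXtu,
          smul_zero, add_zero]
      have hww : w ⬝ᵥ w = (c - 1) ^ 2 + δ ^ 2 := by
        rw [hw]
        simp only [add_dotProduct, dotProduct_add,
          smul_dotProduct, dotProduct_smul, smul_eq_mul,
          hxx, hxu, hux, huu]
        ring
      rw [Matrix.transpose_add, Matrix.add_mul, Matrix.mul_add, Matrix.mul_add, hXX]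
      have h20 : Xᵀ * W = (c - 1) • Z := by
        rw [hW, _root_.mul_vecMulVec, hXtw, hZ, _root_.vecMulVec_smul_left]
      have h21 : Wᵀ * X = (c - 1) • Z := by
        rw [hW, _root_.vecMulVec_transpose, _root_.vecMulVec_mul, ← Matrix.mulVec_transpose, hXtw, hZ,
          _root_.vecMulVec_smul_right]
      have h22 : Wᵀ * W = ((c - 1) ^ 2 + δ ^ 2) • Z := by
        rw [hW, _root_.vecMulVec_transpose, _root_.vecMulVec_mul_vecMulVec, hww, hZ]
      rw [h20, h21, h22]
      have h23 : (c - 1) • Z + ((c - 1) • Z + ((c - 1) ^ 2 + δ ^ 2) • Z) = (0 : ℝ) • Z := by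
        rw [← add_smul, ← add_smul]
        congr 1
        nlinarith [hc2]
      rw [add_assoc, h23, zero_smul, add_zero]
    · -- symmetry
      rw [Matrix.IsSymm, Matrix.transpose_add, Matrix.transpose_smul, hZ,
        _root_.vecMulVec_transpose, hΘsym]
    · -- distance
      have h24 : X + W - X = W := by rw [add_sub_cancel_left]
      have h25 : Θ + s • Z - Θ = s • Z := by rw [add_sub_cancel_left]
      rw [h24, h25, frob_sq_smul, hW, hZ, frob_sq_vecMulVec, frob_sq_vecMulVec, hzz]
      have hww : w ⬝ᵥ w = (c - 1) ^ 2 + δ ^ 2 := by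
        rw [hw]
        simp only [add_dotProduct, dotProduct_add,
          smul_dotProduct, dotProduct_smul, smul_eq_mul,
          hxx, hxu, hux, huu]
        ring
      rw [hww]
      have hbound : ((c - 1) ^ 2 + δ ^ 2) * 1 + s ^ 2 * (1 * 1) ≤ ν ^ 2 := by
        nlinarith [hclb, hc1, hδν, hδ1, hδpos, hsν, hspos, hν]
      calc Real.sqrt (((c - 1) ^ 2 + δ ^ 2) * 1 + s ^ 2 * (1 * 1))
          ≤ Real.sqrt (ν ^ 2) := Real.sqrt_le_sqrt hbound
        _ = ν := Real.sqrt_sq hν.le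
    · -- function value decreases
      have hZΘ : W * Θ = 0 := by
        rw [hW, _root_.vecMulVec_mul, hzΘ, _root_.vecMulVec_zero_right]
      have hWZ : W * Z = W := by
        rw [hW, hZ, _root_.vecMulVec_mul_vecMulVec, hzz, one_smul]
      have hXZ : X * Z = vecMulVec x z := by
        rw [hZ, _root_.mul_vecMulVec, hx]
      have hstep1 : (X + W) * (Θ + s • Z) = X * Θ + s • vecMulVec q z := by
        rw [Matrix.add_mul, Matrix.mul_add, Matrix.mul_add, hZΘ, zero_add,
          Matrix.mul_smul, Matrix.mul_smul, hXZ, hWZ]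
        rw [add_assoc, ← smul_add, hW, ← _root_.vecMulVec_add_left, hxwq]
      have hXΘWt : (X * Θ) * Wᵀ = 0 := by
        rw [hW, _root_.vecMulVec_transpose, _root_.mul_vecMulVec]
        have : (X * Θ) *ᵥ z = 0 := by
          rw [← Matrix.mulVec_mulVec, hΘz, Matrix.mulVec_zero]
        rw [this, _root_.vecMulVec_zero_left]
      have hVXt : vecMulVec q z * Xᵀ = vecMulVec q x := by
        rw [_root_.vecMulVec_mul, Matrix.vecMul_transpose, hx]
      have hVWt : vecMulVec q z * Wᵀ = vecMulVec q w := by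
        rw [hW, _root_.vecMulVec_transpose, _root_.vecMulVec_mul_vecMulVec, hzz, one_smul]
      have hfacm : (X + W) * (Θ + s • Z) * (X + W)ᵀ = Aρ + s • vecMulVec q q := by
        rw [hstep1, Matrix.transpose_add, Matrix.add_mul, Matrix.mul_add, Matrix.mul_add,
          hfac, hXΘWt, add_zero, Matrix.smul_mul, Matrix.smul_mul, hVXt, hVWt]
        rw [← smul_add, ← _root_.vecMulVec_add_right, hxwq]
      have hEq : (Aρ - A) *ᵥ q = (-(δ * lρ)) • u := by
        rw [hq, Matrix.mulVec_add, Matrix.mulVec_smul, Matrix.mulVec_smul]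
        have h26 : (Aρ - A) *ᵥ x = 0 := by
          rw [show Aρ - A = -(A - Aρ) by rw [neg_sub], Matrix.neg_mulVec, hEmx, neg_zero]
        have h27 : (Aρ - A) *ᵥ u = (-lρ) • u := by
          rw [Matrix.sub_mulVec, hAρu, hAu, zero_sub, neg_smul]
        rw [h26, h27, smul_zero, zero_add, smul_smul]
        rw [neg_smul, mul_neg, neg_smul]
      have hqu : q ⬝ᵥ u = δ := by
        rw [hq, add_dotProduct, smul_dotProduct, smul_dotProduct,
          hxu, huu, smul_eq_mul, smul_eq_mul]
        ring
      have hqq : q ⬝ᵥ q = 1 := by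
        rw [hq]
        simp only [add_dotProduct, dotProduct_add,
          smul_dotProduct, dotProduct_smul, smul_eq_mul,
          hxx, hxu, hux, huu]
        nlinarith [hc2]
      have hcross : q ⬝ᵥ ((Aρ - A) *ᵥ q) = -(δ ^ 2 * lρ) := by
        rw [hEq, dotProduct_smul, hqu, smul_eq_mul]
        ring
      have hdiff : (X + W) * (Θ + s • Z) * (X + W)ᵀ - A =
          (X * Θ * Xᵀ - A) + s • vecMulVec q q := by
        rw [hfacm, hfac]
        abel
      rw [hdiff, frob_sq_add, frob_sq_smul, frob_sq_vecMulVec, hqq]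
      have hcross2 : ((X * Θ * Xᵀ - A)ᵀ * (s • vecMulVec q q)).trace = s * (-(δ ^ 2 * lρ)) := by
        rw [Matrix.mul_smul, Matrix.trace_smul, trace_transpose_mul_vecMulVec, smul_eq_mul]
        rw [hE]
        rw [show -(A - Aρ) = Aρ - A by rw [neg_sub]]
        rw [hcross]
      rw [hcross2]
      nlinarith [hspos, hsl, hlρpos, hδpos]

end
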